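/- For integers k and m with 3 < k < m < 2k−1, the bipartite graph Λ_{(m,k)} has a legal system: the system of moves in which every vertex of N_m has move N_m and every vertex of C(m,k) has move C(m,k) admits a legal orbit. -/
import Mathlib


open SimpleGraph

/-- A state `S` of a graph is *legal* if both `S` and its complement induce
nonempty connected subgraphs. -/
def Legal {V : Type*} (G : SimpleGraph V) (S : Set V) : Prop :=
  S.Nonempty ∧ Sᶜ.Nonempty ∧ (G.induce S).Connected ∧ (G.induce Sᶜ).Connected

/-- A state is *strongly legal* if it is legal and moreover every vertex of `S`
is adjacent to a vertex of the complement and vice versa. -/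
def StronglyLegal {V : Type*} (G : SimpleGraph V) (S : Set V) : Prop :=
  Legal G S ∧ (∀ v ∈ S, ∃ u ∈ Sᶜ, G.Adj v u) ∧ (∀ u ∈ Sᶜ, ∃ v ∈ S, G.Adj u v)

/-- A *system of moves*: each `m v` contains `v` and no neighbour of `v`. -/
def IsMoveSystem {V : Type*} (G : SimpleGraph V) (m : V → Set V) : Prop :=
  ∀ v, v ∈ m v ∧ ∀ u, G.Adj u v → u ∉ m v

/-- Reachability of states under the group generated by the moves, acting by
symmetric difference. -/
def Reach {V : Type*} (m : V → Set V) : Set V → Set V → Prop :=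
  Relation.ReflTransGen fun T T' => ∃ v, T' = symmDiff (m v) T

/-- The orbit of `S` under the moves is a *legal orbit*: all its states are legal. -/
def IsLegalOrbit {V : Type*} (G : SimpleGraph V) (m : V → Set V) (S : Set V) : Prop :=
  ∀ T, Reach m S T → Legal G T

/-- `Γ` has a *legal system* if some system of moves admits a legal orbit. -/
def HasLegalSystem {V : Type*} (G : SimpleGraph V) : Prop :=
  ∃ (m : V → Set V) (S : Set V), IsMoveSystem G m ∧ IsLegalOrbit G m S

/-- The bipartite graph `Λ_{(m,k)}` on `{1,…,m} ⊔ (k-subsets of {1,…,m})`,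
joining `r` to `A` iff `r ∈ A`. -/
def lambdaGraph (m k : ℕ) :
    SimpleGraph (Fin m ⊕ {A : Finset (Fin m) // A.card = k}) :=
  SimpleGraph.fromRel fun x y =>
    match x, y with
    | .inl r, .inr A => r ∈ A.1
    | _, _ => False

abbrev KK (m k : ℕ) := {A : Finset (Fin m) // A.card = k}

def stateSet (m k : ℕ) (X' : Set (Fin m)) (A' : Set (KK m k)) :
    Set (Fin m ⊕ KK m k) := fun v => Sum.elim (· ∈ X') (· ∈ A') v

lemma stateSet_compl (m k : ℕ) (X' : Set (Fin m)) (A' : Set (KK m k)) :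
    (stateSet m k X' A')ᶜ = stateSet m k X'ᶜ A'ᶜ := by
  ext v; cases v <;> exact Iff.rfl

lemma lg_adj {m k : ℕ} {x : Fin m} {B : KK m k} :
    (lambdaGraph m k).Adj (.inl x) (.inr B) ↔ x ∈ B.1 := by
  simp [lambdaGraph, SimpleGraph.fromRel_adj]

lemma lg_not_adj_ll {m k : ℕ} {x y : Fin m} :
    ¬ (lambdaGraph m k).Adj (.inl x) (.inl y) := by
  simp [lambdaGraph, SimpleGraph.fromRel_adj]

lemma lg_not_adj_rr {m k : ℕ} {A B : KK m k} :
    ¬ (lambdaGraph m k).Adj (.inr A) (.inr B) := by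
  simp [lambdaGraph, SimpleGraph.fromRel_adj]

lemma conn_state (m k : ℕ) (X' : Set (Fin m)) (A' : Set (KK m k))
    (h : Fin m) (hh : h ∈ X')
    (hcov : ∀ B : KK m k, B ∈ A' → ∃ x ∈ X', x ∈ B.1)
    (hlink : ∀ x ∈ X', ∃ B : KK m k, B ∈ A' ∧ x ∈ B.1 ∧ h ∈ B.1) :
    ((lambdaGraph m k).induce (stateSet m k X' A')).Connected := by
  have hh' : (Sum.inl h : Fin m ⊕ KK m k) ∈ stateSet m k X' A' := hh
  rw [SimpleGraph.connected_iff]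
  refine ⟨fun u v => ?_, ⟨⟨.inl h, hh'⟩⟩⟩
  have key : ∀ w : (stateSet m k X' A'),
      ((lambdaGraph m k).induce (stateSet m k X' A')).Reachable ⟨.inl h, hh'⟩ w := by
    rintro ⟨(x | B), hw⟩
    · have hx : x ∈ X' := hw
      obtain ⟨B, hBA, hxB, hhB⟩ := hlink x hx
      have e1 : ((lambdaGraph m k).induce (stateSet m k X' A')).Adj
          ⟨.inl h, hh'⟩ ⟨.inr B, hBA⟩ := lg_adj.2 hhB
      have e2 : ((lambdaGraph m k).induce (stateSet m k X' A')).Adj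
          ⟨.inr B, hBA⟩ ⟨.inl x, hw⟩ := (lg_adj.2 hxB).symm
      exact e1.reachable.trans e2.reachable
    · have hB : B ∈ A' := hw
      obtain ⟨x, hxX, hxB⟩ := hcov B hB
      obtain ⟨B', hB'A, hxB', hhB'⟩ := hlink x hxX
      have e1 : ((lambdaGraph m k).induce (stateSet m k X' A')).Adj
          ⟨.inl h, hh'⟩ ⟨.inr B', hB'A⟩ := lg_adj.2 hhB'
      have e2 : ((lambdaGraph m k).induce (stateSet m k X' A')).Adj
          ⟨.inr B', hB'A⟩ ⟨.inl x, hxX⟩ := (lg_adj.2 hxB').symm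
      have e3 : ((lambdaGraph m k).induce (stateSet m k X' A')).Adj
          ⟨.inl x, hxX⟩ ⟨.inr B, hw⟩ := lg_adj.2 hxB
      exact (e1.reachable.trans e2.reachable).trans e3.reachable
  exact (key u).symm.trans (key v)

lemma meets_X (m k : ℕ) (h1 : 3 < k) (h3 : m < 2*k-1)
    (B : Finset (Fin m)) (hB : B.card = k) :
    ∃ x ∈ B, (x:ℕ) < k ∧ (x:ℕ) ≠ 1 := by
  by_contra hc
  push_neg at hc
  have hsub : B.image Fin.val ⊆ insert 1 (Finset.Ico k m) := by
    intro n hn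
    simp only [Finset.mem_image] at hn
    obtain ⟨x, hx, rfl⟩ := hn
    have h := hc x hx
    have hxm := x.2
    simp only [Finset.mem_insert, Finset.mem_Ico]
    omega
  have hcard := Finset.card_le_card hsub
  rw [Finset.card_image_of_injective _ Fin.val_injective, hB] at hcard
  have h2 := Finset.card_insert_le (1:ℕ) (Finset.Ico k m)
  rw [Nat.card_Ico] at h2
  omega

lemma meets_Xc (m k : ℕ) (h1 : 3 < k)
    (B : Finset (Fin m)) (hB : B.card = k) :
    ∃ x ∈ B, ¬((x:ℕ) < k ∧ (x:ℕ) ≠ 1) := by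
  by_contra hc
  push_neg at hc
  have hsub : B.image Fin.val ⊆ (Finset.range k).erase 1 := by
    intro n hn
    simp only [Finset.mem_image] at hn
    obtain ⟨x, hx, rfl⟩ := hn
    have h := hc x hx
    simp only [Finset.mem_erase, Finset.mem_range]
    omega
  have hcard := Finset.card_le_card hsub
  rw [Finset.card_image_of_injective _ Fin.val_injective, hB] at hcard
  rw [Finset.card_erase_of_mem (by simp; omega), Finset.card_range] at hcard
  omega

lemma exists_kset (m k : ℕ) (hk : k ≤ m) (s : Finset (Fin m)) (hs : s.card ≤ k) :
    ∃ B : Finset (Fin m), s ⊆ B ∧ B.card = k := by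
  obtain ⟨u, hu1, _, hu3⟩ := Finset.exists_subsuperset_card_eq (s.subset_univ)
    hs (by simpa using hk)
  exact ⟨u, hu1, hu3⟩

lemma exists_kset_avoid (m k : ℕ) (hk : k + 1 ≤ m) (s : Finset (Fin m)) (hs : s.card ≤ k)
    (z : Fin m) (hz : z ∉ s) :
    ∃ B : Finset (Fin m), s ⊆ B ∧ B.card = k ∧ z ∉ B := by
  have hst : s ⊆ Finset.univ.erase z := by
    intro a ha
    exact Finset.mem_erase.2 ⟨fun h => hz (h ▸ ha), Finset.mem_univ a⟩
  have hcard : k ≤ (Finset.univ.erase z).card := by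
    rw [Finset.card_erase_of_mem (Finset.mem_univ z)]
    simp; omega
  obtain ⟨u, hu1, hu2, hu3⟩ := Finset.exists_subsuperset_card_eq hst hs hcard
  exact ⟨u, hu1, hu3, fun h => (Finset.mem_erase.1 (hu2 h)).1 rfl⟩

/-- for `3 < k < m < 2k−1`, the system of moves assigning to each
vertex of `N_m` the move `N_m` and to each vertex of `C(m,k)` the move `C(m,k)`
is a legal system on `Λ_{(m,k)}`. -/
theorem lambdaGraph_bipartition_legal_system (m k : ℕ)
    (h1 : 3 < k) (h2 : k < m) (h3 : m < 2 * k - 1) :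
    IsMoveSystem (lambdaGraph m k)
      (fun x => if x.isLeft then {y | y.isLeft = true} else {y | y.isRight = true}) ∧
    ∃ S, IsLegalOrbit (lambdaGraph m k)
      (fun x => if x.isLeft then {y | y.isLeft = true} else {y | y.isRight = true}) S := by
  have hm5 : 5 ≤ m := by omega
  constructor
  · intro v
    rcases v with x | B
    · refine ⟨by simp, ?_⟩
      intro u hu
      rcases u with x' | B'
      · exact absurd hu lg_not_adj_ll
      · simp
    · refine ⟨by simp, ?_⟩
      intro u hu
      rcases u with x' | B'
      · simp
      · exact absurd hu lg_not_adj_rr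
  · set z0 : Fin m := ⟨0, by omega⟩ with hz0
    set z1 : Fin m := ⟨1, by omega⟩ with hz1
    have hz01 : z0 ≠ z1 := by simp [hz0, hz1, Fin.ext_iff]
    set X : Set (Fin m) := {x | (x:ℕ) < k ∧ (x:ℕ) ≠ 1} with hX
    set A : Set (KK m k) := {B | z0 ∈ B.1 ∧ z1 ∈ B.1} with hA
    have hz0X : z0 ∈ X := by simp [hX, hz0]; omega
    have hz1Xc : z1 ∈ Xᶜ := by simp [hX, hz1]
    have hc3 : ∀ a b c : Fin m, ({a, b, c} : Finset (Fin m)).card ≤ k := by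
      intro a b c
      have t1 := Finset.card_insert_le a ({b, c} : Finset (Fin m))
      have t2 := Finset.card_insert_le b ({c} : Finset (Fin m))
      have t3 : ({c} : Finset (Fin m)).card = 1 := Finset.card_singleton c
      omega
    have hc2 : ∀ a b : Fin m, ({a, b} : Finset (Fin m)).card ≤ k := by
      intro a b
      have t2 := Finset.card_insert_le a ({b} : Finset (Fin m))
      have t3 : ({b} : Finset (Fin m)).card = 1 := Finset.card_singleton b
      omega
    -- the four connectivity facts
    have C1 : ((lambdaGraph m k).induce (stateSet m k X A)).Connected := by
      apply conn_state m k X A z0 hz0X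
      · intro B hB; exact ⟨z0, hz0X, hB.1⟩
      · intro x hx
        obtain ⟨B, hsB, hBc⟩ := exists_kset m k (by omega) {z0, z1, x} (hc3 _ _ _)
        exact ⟨⟨B, hBc⟩, ⟨hsB (by simp), hsB (by simp)⟩, hsB (by simp), hsB (by simp)⟩
    have C2 : ((lambdaGraph m k).induce (stateSet m k X Aᶜ)).Connected := by
      apply conn_state m k X Aᶜ z0 hz0X
      · intro B _
        obtain ⟨x, hxB, hx1, hx2⟩ := meets_X m k h1 h3 B.1 B.2
        exact ⟨x, ⟨hx1, hx2⟩, hxB⟩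
      · intro x hx
        have hxz1 : x ≠ z1 := by
          simp only [hX, Set.mem_setOf_eq] at hx
          simp [hz1, Fin.ext_iff]; omega
        obtain ⟨B, hsB, hBc, hz1B⟩ := exists_kset_avoid m k (by omega) {z0, x}
          (hc2 _ _) z1 (by simp [hz01.symm, Ne.symm hxz1])
        exact ⟨⟨B, hBc⟩, fun h => hz1B h.2, hsB (by simp), hsB (by simp)⟩
    have C3 : ((lambdaGraph m k).induce (stateSet m k Xᶜ A)).Connected := by
      apply conn_state m k Xᶜ A z1 hz1Xc
      · intro B hB; exact ⟨z1, hz1Xc, hB.2⟩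
      · intro y hy
        obtain ⟨B, hsB, hBc⟩ := exists_kset m k (by omega) {z0, z1, y} (hc3 _ _ _)
        exact ⟨⟨B, hBc⟩, ⟨hsB (by simp), hsB (by simp)⟩, hsB (by simp), hsB (by simp)⟩
    have C4 : ((lambdaGraph m k).induce (stateSet m k Xᶜ Aᶜ)).Connected := by
      apply conn_state m k Xᶜ Aᶜ z1 hz1Xc
      · intro B _
        obtain ⟨x, hxB, hx1⟩ := meets_Xc m k h1 B.1 B.2
        exact ⟨x, hx1, hxB⟩
      · intro y hy
        have hy' : k ≤ (y:ℕ) ∨ (y:ℕ) = 1 := by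
          simp only [hX, Set.mem_compl_iff, Set.mem_setOf_eq, not_and, not_not] at hy
          by_cases hlt : (y:ℕ) < k
          · exact .inr (hy hlt)
          · exact .inl (by omega)
        have hyz0 : y ≠ z0 := by simp [hz0, Fin.ext_iff]; omega
        obtain ⟨B, hsB, hBc, hz0B⟩ := exists_kset_avoid m k (by omega) {z1, y}
          (hc2 _ _) z0 (by simp [hz01, Ne.symm hyz0])
        exact ⟨⟨B, hBc⟩, fun h => hz0B h.1, hsB (by simp), hsB (by simp)⟩
    -- legality of the four states
    have leg1 : Legal (lambdaGraph m k) (stateSet m k X A) := by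
      refine ⟨⟨.inl z0, hz0X⟩, ?_, C1, ?_⟩ <;>
        rw [stateSet_compl]
      · exact ⟨.inl z1, hz1Xc⟩
      · exact C4
    have leg2 : Legal (lambdaGraph m k) (stateSet m k Xᶜ A) := by
      refine ⟨⟨.inl z1, hz1Xc⟩, ?_, C3, ?_⟩ <;>
        rw [stateSet_compl, compl_compl]
      · exact ⟨.inl z0, hz0X⟩
      · exact C2
    have leg3 : Legal (lambdaGraph m k) (stateSet m k X Aᶜ) := by
      refine ⟨⟨.inl z0, hz0X⟩, ?_, C2, ?_⟩ <;>
        rw [stateSet_compl, compl_compl]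
      · exact ⟨.inl z1, hz1Xc⟩
      · exact C3
    have leg4 : Legal (lambdaGraph m k) (stateSet m k Xᶜ Aᶜ) := by
      refine ⟨⟨.inl z1, hz1Xc⟩, ?_, C4, ?_⟩ <;>
        rw [stateSet_compl, compl_compl, compl_compl]
      · exact ⟨.inl z0, hz0X⟩
      · exact C1
    -- symmDiff computations
    have hL : ∀ (X' : Set (Fin m)) (A' : Set (KK m k)),
        symmDiff {y : Fin m ⊕ KK m k | y.isLeft = true} (stateSet m k X' A')
          = stateSet m k X'ᶜ A' := by
      intro X' A'
      apply Set.ext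
      rintro (x | B) <;> rw [Set.mem_symmDiff]
      · constructor
        · rintro (⟨-, h⟩ | ⟨-, hn⟩)
          · exact h
          · exact absurd rfl hn
        · intro h; exact Or.inl ⟨rfl, h⟩
      · constructor
        · rintro (⟨h, -⟩ | ⟨h, -⟩)
          · exact absurd h (by simp)
          · exact h
        · intro h; exact Or.inr ⟨h, by simp⟩
    have hR : ∀ (X' : Set (Fin m)) (A' : Set (KK m k)),
        symmDiff {y : Fin m ⊕ KK m k | y.isRight = true} (stateSet m k X' A')
          = stateSet m k X' A'ᶜ := by
      intro X' A'
      apply Set.ext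
      rintro (x | B) <;> rw [Set.mem_symmDiff]
      · constructor
        · rintro (⟨h, -⟩ | ⟨h, -⟩)
          · exact absurd h (by simp)
          · exact h
        · intro h; exact Or.inr ⟨h, by simp⟩
      · constructor
        · rintro (⟨-, h⟩ | ⟨-, hn⟩)
          · exact h
          · exact absurd rfl hn
        · intro h; exact Or.inl ⟨rfl, h⟩
    refine ⟨stateSet m k X A, ?_⟩
    intro T hT
    have good : T = stateSet m k X A ∨ T = stateSet m k Xᶜ A ∨
        T = stateSet m k X Aᶜ ∨ T = stateSet m k Xᶜ Aᶜ := by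
      induction hT with
      | refl => exact .inl rfl
      | tail _ hstep ih =>
        obtain ⟨v, rfl⟩ := hstep
        rcases v with x | B
        · simp only [Sum.isLeft_inl, if_true]
          rcases ih with rfl | rfl | rfl | rfl
          · rw [hL]; exact .inr (.inl rfl)
          · rw [hL, compl_compl]; exact .inl rfl
          · rw [hL]; exact .inr (.inr (.inr rfl))
          · rw [hL, compl_compl]; exact .inr (.inr (.inl rfl))
        · simp only [Sum.isLeft_inr, Bool.false_eq_true, if_false]
          rcases ih with rfl | rfl | rfl | rfl
          · rw [hR]; exact .inr (.inr (.inl rfl))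
          · rw [hR]; exact .inr (.inr (.inr rfl))
          · rw [hR, compl_compl]; exact .inl rfl
          · rw [hR, compl_compl]; exact .inr (.inl rfl)
    rcases good with rfl | rfl | rfl | rfl
    · exact leg1
    · exact leg2
    · exact leg3
    · exact leg4
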